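/- arXiv:2004.05925 — 9 statements merged into one kernel-verified Lean document; each statement's English description precedes it below -/
import Mathlib

section
/- Let P ≥ 1 and let Δ be a symmetric positive definite P × P real matrix. Let w* ∈ ℝ^P be a design (w*_i ≥ 0 for all i and Σ_i w*_i = 1) with information matrix M* = diag(w*_1, …, w*_P). If tr( M* (M* + Δ⁻¹)⁻² ) ≥ e_iᵀ (M* + Δ⁻¹)⁻² e_i for all i = 1, …, P, then w* minimizes the A-criterion Φ_A(w) = tr( (M(w) + Δ⁻¹)⁻¹ ) over all designs w, where M(w) = diag(w_1, …, w_P). -/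
open Matrix

lemma psd_trace_nonneg {n : Type*} [Fintype n] [DecidableEq n] {M : Matrix n n ℝ} (h : M.PosSemidef) :
    0 ≤ M.trace := by
  refine Finset.sum_nonneg fun i _ => ?_
  exact h.diag_nonneg

/-- Sufficiency part of the equivalence theorem for the A-criterion
    `Φ_A(w) = tr((M(w) + Δ⁻¹)⁻¹)`: if the design `w` satisfies the optimality condition
    `tr(M(w)(M(w)+Δ⁻¹)⁻²) ≥ eᵢᵀ (M(w)+Δ⁻¹)⁻² eᵢ` for all `i`, then `w` is A-optimal. -/
theorem stmt_2 (P : ℕ) (hP : 1 ≤ P)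
    (Δ : Matrix (Fin P) (Fin P) ℝ) (hΔ : Δ.PosDef)
    (w : Fin P → ℝ) (hw : ∀ i, 0 ≤ w i) (hw1 : ∑ i, w i = 1)
    (hopt : ∀ i : Fin P,
      (Matrix.diagonal w * (Matrix.diagonal w + Δ⁻¹)⁻¹ * (Matrix.diagonal w + Δ⁻¹)⁻¹).trace ≥
        ((Matrix.diagonal w + Δ⁻¹)⁻¹ * (Matrix.diagonal w + Δ⁻¹)⁻¹) i i) :
    ∀ v : Fin P → ℝ, (∀ i, 0 ≤ v i) → ∑ i, v i = 1 →
      ((Matrix.diagonal w + Δ⁻¹)⁻¹).trace ≤ ((Matrix.diagonal v + Δ⁻¹)⁻¹).trace := by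
  intro v hv hv1
  set A := Matrix.diagonal w + Δ⁻¹ with hAdef
  set B := Matrix.diagonal v + Δ⁻¹ with hBdef
  have hΔi : (Δ⁻¹).PosDef := hΔ.inv
  have hA : A.PosDef := Matrix.PosDef.posSemidef_add (Matrix.posSemidef_diagonal_iff.mpr hw) hΔi
  have hB : B.PosDef := Matrix.PosDef.posSemidef_add (Matrix.posSemidef_diagonal_iff.mpr hv) hΔi
  have hAu : IsUnit A.det := hA.det_pos.ne'.isUnit
  have hBu : IsUnit B.det := hB.det_pos.ne'.isUnit
  have hAi : A * A⁻¹ = 1 := Matrix.mul_nonsing_inv A hAu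
  have hBi1 : B⁻¹ * B = 1 := Matrix.nonsing_inv_mul B hBu
  have hBi2 : B * B⁻¹ = 1 := Matrix.mul_nonsing_inv B hBu
  -- key identity
  have hexp : (A⁻¹ - B⁻¹) * B * (A⁻¹ - B⁻¹)
      = A⁻¹ * B * A⁻¹ - A⁻¹ - A⁻¹ + B⁻¹ := by
    have : (A⁻¹ - B⁻¹) * B = A⁻¹ * B - 1 := by rw [Matrix.sub_mul, hBi1]
    rw [this, Matrix.sub_mul, Matrix.mul_sub, Matrix.mul_assoc A⁻¹ B B⁻¹, hBi2,
      Matrix.mul_one, one_mul]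
    abel
  have hX : (A⁻¹ - B⁻¹)ᴴ = A⁻¹ - B⁻¹ := by
    exact (hA.isHermitian.inv.sub hB.isHermitian.inv)
  have hpsd : ((A⁻¹ - B⁻¹) * B * (A⁻¹ - B⁻¹)).PosSemidef := by
    have := hB.posSemidef.conjTranspose_mul_mul_same (A⁻¹ - B⁻¹)
    rwa [hX] at this
  have htr0 : 0 ≤ (A⁻¹ * B * A⁻¹).trace - A⁻¹.trace - A⁻¹.trace + B⁻¹.trace := by
    have := psd_trace_nonneg hpsd
    rwa [hexp, Matrix.trace_add, Matrix.trace_sub, Matrix.trace_sub] at this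
  -- decompose traces
  set C := A⁻¹ * A⁻¹ with hC
  have hcyc : (A⁻¹ * B * A⁻¹).trace = (B * C).trace := by
    rw [hC, ← Matrix.mul_assoc]; exact (Matrix.trace_mul_cycle B A⁻¹ A⁻¹).symm
  have hBC : (B * C).trace = (Matrix.diagonal v * C).trace + (Δ⁻¹ * C).trace := by
    rw [hBdef, Matrix.add_mul, Matrix.trace_add]
  have hAC : A⁻¹.trace = (Matrix.diagonal w * C).trace + (Δ⁻¹ * C).trace := by
    have : A * C = A⁻¹ := by rw [hC, ← Matrix.mul_assoc, hAi, one_mul]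
    rw [← this, hAdef, Matrix.add_mul, Matrix.trace_add]
  -- the optimality bound
  set t := (Matrix.diagonal w * A⁻¹ * A⁻¹).trace with ht
  have htC : (Matrix.diagonal w * C).trace = t := by rw [hC, ht, Matrix.mul_assoc]
  have hvC : (Matrix.diagonal v * C).trace ≤ t := by
    have hdiag : (Matrix.diagonal v * C).trace = ∑ i, v i * C i i := by
      simp [Matrix.trace, Matrix.diag, Matrix.diagonal_mul]
    rw [hdiag]
    calc ∑ i, v i * C i i ≤ ∑ i, v i * t := by
          refine Finset.sum_le_sum fun i _ => mul_le_mul_of_nonneg_left ?_ (hv i)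
          exact hopt i
      _ = t := by rw [← Finset.sum_mul, hv1, one_mul]
  have h1 : A⁻¹.trace = t + (Δ⁻¹ * C).trace := by rw [hAC, htC]
  linarith [htr0, hcyc, hBC, hvC, h1]
end

section
/- Let P ≥ 1 and let Δ be a symmetric positive definite P × P real matrix. Let w* ∈ ℝ^P be a design (w*_i ≥ 0, Σ_i w*_i = 1) that minimizes the A-criterion Φ_A(w) = tr( (M(w) + Δ⁻¹)⁻¹ ) over all designs, where M(w) = diag(w_1, …, w_P) and M* = M(w*). Then tr( M* (M* + Δ⁻¹)⁻² ) ≥ e_iᵀ (M* + Δ⁻¹)⁻² e_i for all i = 1, …, P, and for every i with w*_i > 0 equality holds: tr( M* (M* + Δ⁻¹)⁻² ) = e_iᵀ (M* + Δ⁻¹)⁻² e_i. -/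
open Matrix Set Filter Topology

/-- Necessity part of the equivalence theorem for the A-criterion:
    if the design `w` minimizes `Φ_A(v) = tr((M(v) + Δ⁻¹)⁻¹)` over all designs, then
    `tr(M(w)(M(w)+Δ⁻¹)⁻²) ≥ eᵢᵀ (M(w)+Δ⁻¹)⁻² eᵢ` for all `i`, with equality whenever
    `wᵢ > 0`. -/
theorem stmt_3 (P : ℕ) (hP : 1 ≤ P)
    (Δ : Matrix (Fin P) (Fin P) ℝ) (hΔ : Δ.PosDef)
    (w : Fin P → ℝ) (hw : ∀ i, 0 ≤ w i) (hw1 : ∑ i, w i = 1)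
    (hmin : ∀ v : Fin P → ℝ, (∀ i, 0 ≤ v i) → ∑ i, v i = 1 →
      ((Matrix.diagonal w + Δ⁻¹)⁻¹).trace ≤ ((Matrix.diagonal v + Δ⁻¹)⁻¹).trace) :
    (∀ i : Fin P,
      (Matrix.diagonal w * (Matrix.diagonal w + Δ⁻¹)⁻¹ * (Matrix.diagonal w + Δ⁻¹)⁻¹).trace ≥
        ((Matrix.diagonal w + Δ⁻¹)⁻¹ * (Matrix.diagonal w + Δ⁻¹)⁻¹) i i) ∧
    (∀ i : Fin P, 0 < w i →
      (Matrix.diagonal w * (Matrix.diagonal w + Δ⁻¹)⁻¹ * (Matrix.diagonal w + Δ⁻¹)⁻¹).trace =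
        ((Matrix.diagonal w + Δ⁻¹)⁻¹ * (Matrix.diagonal w + Δ⁻¹)⁻¹) i i) := by
  set A : Matrix (Fin P) (Fin P) ℝ := Matrix.diagonal w + Δ⁻¹ with hAdef
  have hposdef : ∀ v : Fin P → ℝ, (∀ i, 0 ≤ v i) →
      (Matrix.diagonal v + Δ⁻¹).PosDef := fun v hv =>
    Matrix.PosDef.posSemidef_add (Matrix.PosSemidef.diagonal (fun i => hv i)) hΔ.inv
  have hA : A.PosDef := hposdef w hw
  set Q : Matrix (Fin P) (Fin P) ℝ := A⁻¹ * A⁻¹ with hQdef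
  have htrd : ∀ (d : Fin P → ℝ), (Matrix.diagonal d * Q).trace = ∑ j, d j * Q j j := by
    intro d
    simp [Matrix.trace, Matrix.diag, Matrix.diagonal_mul]
  have part1 : ∀ i : Fin P, (Matrix.diagonal w * A⁻¹ * A⁻¹).trace ≥ Q i i := by
    intro i
    set d : Fin P → ℝ := fun j => (if j = i then 1 else 0) - w j with hddef
    set D : Matrix (Fin P) (Fin P) ℝ := Matrix.diagonal d with hDdef
    have key : ∀ t : ℝ, t ∈ Ioc (0:ℝ) 1 →
        ((A + t • D)⁻¹ * D * A⁻¹).trace ≤ 0 := by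
      intro t ht
      set v : Fin P → ℝ := fun j => w j + t * d j with hvdef
      have hv0 : ∀ j, 0 ≤ v j := by
        intro j
        have hvj : v j = (1 - t) * w j + t * (if j = i then 1 else 0) := by
          simp only [hvdef, hddef]; ring
        rw [hvj]
        have h1 : (0:ℝ) ≤ 1 - t := by linarith [ht.2]
        have h2 := hw j
        have h3 : (0:ℝ) ≤ (if j = i then (1:ℝ) else 0) := by positivity
        have h4 := ht.1.le
        positivity
      have hv1 : ∑ j, v j = 1 := by
        simp only [hvdef, hddef]
        rw [Finset.sum_add_distrib, hw1, ← Finset.mul_sum, Finset.sum_sub_distrib, hw1]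
        simp
      have hBpd : (Matrix.diagonal v + Δ⁻¹).PosDef := hposdef v hv0
      set B : Matrix (Fin P) (Fin P) ℝ := A + t • D with hBdef
      have hBv : Matrix.diagonal v + Δ⁻¹ = B := by
        rw [hBdef, hDdef, hAdef]
        ext j k
        by_cases hjk : j = k
        · subst hjk
          simp [Matrix.add_apply, Matrix.diagonal_apply_eq, Matrix.smul_apply, hvdef]
          ring
        · simp [Matrix.add_apply, Matrix.diagonal_apply_ne _ hjk, Matrix.smul_apply]
      have hB' : B.PosDef := hBv ▸ hBpd
      have hmin' : A⁻¹.trace ≤ B⁻¹.trace := by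
        have := hmin v hv0 hv1
        rwa [hBv] at this
      have h2 : A * A⁻¹ = 1 := Matrix.mul_nonsing_inv _ hA.det_pos.ne'.isUnit
      have h3 : B⁻¹ * B = 1 := Matrix.nonsing_inv_mul _ hB'.det_pos.ne'.isUnit
      have hident : A⁻¹ = B⁻¹ + t • (B⁻¹ * D * A⁻¹) := by
        calc A⁻¹ = (B⁻¹ * B) * A⁻¹ := by rw [h3, one_mul]
          _ = B⁻¹ * (A * A⁻¹) + t • (B⁻¹ * D * A⁻¹) := by
              rw [hBdef, Matrix.mul_add, Matrix.add_mul, mul_smul_comm, smul_mul_assoc,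
                Matrix.mul_assoc]
          _ = B⁻¹ + t • (B⁻¹ * D * A⁻¹) := by rw [h2, Matrix.mul_one]
      have htr : A⁻¹.trace = B⁻¹.trace + t * (B⁻¹ * D * A⁻¹).trace := by
        have := congrArg Matrix.trace hident
        rwa [Matrix.trace_add, Matrix.trace_smul, smul_eq_mul] at this
      nlinarith [ht.1]
    -- limit as t → 0⁺
    have hcont : ContinuousAt (fun t : ℝ => ((A + t • D)⁻¹ * D * A⁻¹).trace) 0 := by
      have haff : Continuous (fun t : ℝ => A + t • D) := by fun_prop
      have hm : ContinuousAt Inv.inv (A + (0:ℝ) • D) := by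
        apply continuousAt_matrix_inv
        rw [Ring.inverse_eq_inv']
        apply continuousAt_inv₀
        simpa using hA.det_pos.ne'
      have hφ : Continuous (fun M : Matrix (Fin P) (Fin P) ℝ => (M * D * A⁻¹).trace) :=
        ((continuous_id.matrix_mul continuous_const).matrix_mul continuous_const).matrix_trace
      have h1 : ContinuousAt (fun t : ℝ => (A + t • D)⁻¹) 0 :=
        ContinuousAt.comp (x := (0:ℝ)) (f := fun t : ℝ => A + t • D) (g := Inv.inv)
          hm haff.continuousAt
      exact ContinuousAt.comp (f := fun t : ℝ => (A + t • D)⁻¹)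
        (g := fun M : Matrix (Fin P) (Fin P) ℝ => (M * D * A⁻¹).trace) hφ.continuousAt h1
    have hg0 : (fun t : ℝ => ((A + t • D)⁻¹ * D * A⁻¹).trace) 0
        = (A⁻¹ * D * A⁻¹).trace := by simp
    have hlim : Tendsto (fun t : ℝ => ((A + t • D)⁻¹ * D * A⁻¹).trace) (𝓝[>] (0:ℝ))
        (𝓝 ((A⁻¹ * D * A⁻¹).trace)) := by
      rw [← hg0]
      exact hcont.continuousWithinAt.tendsto
    have h0 : (A⁻¹ * D * A⁻¹).trace ≤ 0 := by
      refine le_of_tendsto hlim ?_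
      filter_upwards [Ioc_mem_nhdsGT (zero_lt_one)] with t ht using key t ht
    -- rewrite the trace
    have hcyc : (A⁻¹ * D * A⁻¹).trace = (Matrix.diagonal d * Q).trace := by
      rw [Matrix.trace_mul_comm (A⁻¹ * D) A⁻¹, ← Matrix.mul_assoc,
        Matrix.trace_mul_comm (A⁻¹ * A⁻¹) D, ← hQdef, hDdef]
    have hsplit : (Matrix.diagonal d * Q).trace = Q i i - ∑ j, w j * Q j j := by
      rw [htrd d]
      simp only [hddef, sub_mul]
      rw [Finset.sum_sub_distrib]
      congr 1
      simp
    have hwQ : (Matrix.diagonal w * A⁻¹ * A⁻¹).trace = ∑ j, w j * Q j j := by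
      rw [Matrix.mul_assoc, ← hQdef, htrd w]
    rw [hcyc, hsplit] at h0
    rw [hwQ]
    linarith
  refine ⟨fun i => part1 i, fun i hi => ?_⟩
  have hwQ : (Matrix.diagonal w * A⁻¹ * A⁻¹).trace = ∑ j, w j * Q j j := by
    rw [Matrix.mul_assoc, ← hQdef, htrd w]
  set T : ℝ := (Matrix.diagonal w * A⁻¹ * A⁻¹).trace with hTdef
  have hsum : ∑ j, w j * (T - Q j j) = 0 := by
    simp only [mul_sub]
    rw [Finset.sum_sub_distrib, ← Finset.sum_mul, hw1, one_mul, ← hwQ]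
    exact sub_self T
  have hnonneg : ∀ j ∈ Finset.univ, 0 ≤ w j * (T - Q j j) := by
    intro j _
    have := part1 j
    have h2 := hw j
    have h3 : Q j j ≤ T := this
    nlinarith
  have := (Finset.sum_eq_zero_iff_of_nonneg hnonneg).mp hsum i (Finset.mem_univ i)
  have hne : w i ≠ 0 := hi.ne'
  have : T - Q i i = 0 := by
    rcases mul_eq_zero.mp this with h | h
    · exact absurd h hne
    · exact h
  linarith
end

section
/- Let P ≥ 1 and let Δ be a symmetric positive definite P × P real matrix. Let w* be a design (w*_i ≥ 0, Σ_i w*_i = 1) that minimizes Φ_A(w) = tr( (M(w) + Δ⁻¹)⁻¹ ) over all designs, where M(w) = diag(w_1, …, w_P). If i and i' are two indices with w*_i > 0 and w*_{i'} > 0, then e_iᵀ (M(w*) + Δ⁻¹)⁻² e_i = e_{i'}ᵀ (M(w*) + Δ⁻¹)⁻² e_{i'}. -/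
open Matrix

attribute [local instance] Matrix.linftyOpNormedRing Matrix.linftyOpNormedAlgebra

/-- for an A-optimal design `w`, all support points `i, i'` (those with
    `wᵢ > 0`, `w_{i'} > 0`) give the same value
    `eᵢᵀ (M(w)+Δ⁻¹)⁻² eᵢ = e_{i'}ᵀ (M(w)+Δ⁻¹)⁻² e_{i'}`. -/
theorem stmt_4 (P : ℕ) (hP : 1 ≤ P)
    (Δ : Matrix (Fin P) (Fin P) ℝ) (hΔ : Δ.PosDef)
    (w : Fin P → ℝ) (hw : ∀ i, 0 ≤ w i) (hw1 : ∑ i, w i = 1)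
    (hmin : ∀ v : Fin P → ℝ, (∀ i, 0 ≤ v i) → ∑ i, v i = 1 →
      ((Matrix.diagonal w + Δ⁻¹)⁻¹).trace ≤ ((Matrix.diagonal v + Δ⁻¹)⁻¹).trace)
    (i i' : Fin P) (hi : 0 < w i) (hi' : 0 < w i') :
    ((Matrix.diagonal w + Δ⁻¹)⁻¹ * (Matrix.diagonal w + Δ⁻¹)⁻¹) i i =
      ((Matrix.diagonal w + Δ⁻¹)⁻¹ * (Matrix.diagonal w + Δ⁻¹)⁻¹) i' i' := by
  by_cases hii : i = i'
  · rw [hii]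
  have hΔinv : (Δ⁻¹).PosDef := hΔ.inv
  have hposdef : ∀ v : Fin P → ℝ, (∀ j, 0 ≤ v j) → (Matrix.diagonal v + Δ⁻¹).PosDef := fun v hv =>
    Matrix.PosDef.posSemidef_add (Matrix.posSemidef_diagonal_iff.mpr fun j => hv j) hΔinv
  set A : Matrix (Fin P) (Fin P) ℝ := Matrix.diagonal w + Δ⁻¹ with hA
  have hApd : A.PosDef := hposdef w hw
  have hAunit : IsUnit A := hApd.isUnit
  set d : Fin P → ℝ := Pi.single i' 1 - Pi.single i 1 with hd
  set C : Matrix (Fin P) (Fin P) ℝ := Matrix.diagonal d with hC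
  set f : ℝ → ℝ := fun t => (Ring.inverse (A + t • C)).trace with hf
  -- values on the admissible interval
  have hval : ∀ t ∈ Set.Icc (-(w i')) (w i), f t = ((Matrix.diagonal (w + t • d) + Δ⁻¹)⁻¹).trace
      ∧ (∀ j, 0 ≤ (w + t • d) j) ∧ ∑ j, (w + t • d) j = 1 := by
    intro t ht
    have hnn : ∀ j, 0 ≤ (w + t • d) j := by
      intro j
      simp only [Pi.add_apply, Pi.smul_apply, hd, Pi.sub_apply, smul_eq_mul]
      rcases eq_or_ne j i' with rfl | hj'
      · rw [Pi.single_eq_same, Pi.single_eq_of_ne (Ne.symm (by simpa [eq_comm] using hii))]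
        have := ht.1
        nlinarith
      rcases eq_or_ne j i with rfl | hj
      · rw [Pi.single_eq_of_ne hj', Pi.single_eq_same]
        have := ht.2
        nlinarith
      · rw [Pi.single_eq_of_ne hj', Pi.single_eq_of_ne hj]
        simpa using hw j
    have hsum : ∑ j, (w + t • d) j = 1 := by
      simp only [Pi.add_apply, Pi.smul_apply, hd, Pi.sub_apply, smul_eq_mul,
        Finset.sum_add_distrib, hw1, mul_sub, Finset.sum_sub_distrib, ← Finset.mul_sum]
      simp [Finset.sum_pi_single]
    have hdiag : Matrix.diagonal (w + t • d) + Δ⁻¹ = A + t • C := by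
      have hdd : Matrix.diagonal (w + t • d) = Matrix.diagonal w + t • Matrix.diagonal d := by
        ext j k
        by_cases h : j = k
        · subst h; simp [Matrix.diagonal_apply_eq]
        · simp [Matrix.diagonal_apply_ne _ h]
      rw [hA, hC, hdd]
      abel
    have hpd := hposdef _ hnn
    rw [hdiag] at hpd
    refine ⟨?_, hnn, hsum⟩
    rw [hf]
    simp only [← Matrix.nonsing_inv_eq_ringInverse, hdiag]
  -- local min
  have hmem : Set.Icc (-(w i')) (w i) ∈ nhds (0 : ℝ) :=
    Icc_mem_nhds (by linarith) hi
  have hlocmin : IsLocalMin f 0 := by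
    filter_upwards [hmem] with t ht
    obtain ⟨hft, hnn, hsum⟩ := hval t ht
    have h0 := hval 0 ⟨by linarith, le_of_lt hi⟩
    rw [hft, h0.1]
    have : w + (0:ℝ) • d = w := by simp
    rw [this]
    exact hmin _ hnn hsum
  -- derivative
  have hg : HasDerivAt (fun t : ℝ => A + t • C) C 0 := by
    have h := ((hasDerivAt_id (0:ℝ)).smul_const C).const_add A
    rw [one_smul] at h
    exact h
  have hinv : HasDerivAt (fun t : ℝ => Ring.inverse (A + t • C)) (-(A⁻¹ * C * A⁻¹)) 0 := by
    have h1 := (hasFDerivAt_ringInverse (𝕜 := ℝ) hAunit.unit)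
    rw [hAunit.unit_spec] at h1
    have h1' : HasFDerivAt Ring.inverse
        (-(ContinuousLinearMap.mulLeftRight ℝ _ ↑hAunit.unit⁻¹) ↑hAunit.unit⁻¹)
        (A + (0:ℝ) • C) := by simpa using h1
    have h2 := h1'.comp_hasDerivAt 0 hg
    simp [Matrix.coe_units_inv, hAunit.unit_spec, ContinuousLinearMap.mulLeftRight_apply] at h2
    exact h2
  have htr : HasDerivAt f (-(A⁻¹ * C * A⁻¹)).trace 0 := by
    have h3 := (Matrix.traceLinearMap (Fin P) ℝ ℝ).toContinuousLinearMap.hasFDerivAt.comp_hasDerivAt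
      0 hinv
    simp only [Function.comp_def] at h3
    rw [hf]
    exact h3.congr_deriv (by rfl)
  have hderiv0 : (-(A⁻¹ * C * A⁻¹)).trace = 0 := by
    rw [← htr.deriv]
    exact hlocmin.deriv_eq_zero
  -- compute the trace
  have hcyc : (A⁻¹ * C * A⁻¹).trace = (A⁻¹ * A⁻¹ * C).trace := by
    rw [Matrix.trace_mul_cycle]
  rw [Matrix.trace_neg, neg_eq_zero, hcyc] at hderiv0
  have : (A⁻¹ * A⁻¹ * C).trace = (A⁻¹ * A⁻¹) i' i' - (A⁻¹ * A⁻¹) i i := by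
    rw [hC, Matrix.trace]
    simp only [Matrix.diag_apply, Matrix.mul_diagonal, hd, Pi.sub_apply]
    simp [Pi.single_apply, mul_sub, Finset.sum_sub_distrib, mul_ite, mul_one, mul_zero,
      Finset.sum_ite_eq']
  rw [this] at hderiv0
  linarith
end

section
/- Let P ≥ 1, let Δ be a symmetric positive definite P × P real matrix, and let L = diag(ℓ_1, …, ℓ_P) with ℓ_i ≥ 0. Let w* ∈ ℝ^P be a design (w*_i ≥ 0, Σ_i w*_i = 1) with M* = diag(w*_1, …, w*_P). If tr( M* (M* + Δ⁻¹)⁻¹ L (M* + Δ⁻¹)⁻¹ ) ≥ e_iᵀ (M* + Δ⁻¹)⁻¹ L (M* + Δ⁻¹)⁻¹ e_i for all i = 1, …, P, then w* minimizes the weighted A-criterion Φ_{A_w}(w) = tr( L (M(w) + Δ⁻¹)⁻¹ ) over all designs w, where M(w) = diag(w_1, …, w_P). -/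
open Matrix

lemma trace_diagonal_mul' {n : ℕ} (d : Fin n → ℝ) (S : Matrix (Fin n) (Fin n) ℝ) :
    (Matrix.diagonal d * S).trace = ∑ i, d i * S i i := by
  simp [Matrix.trace, Matrix.diag, Matrix.mul_apply, Matrix.diagonal_apply, Finset.sum_ite_eq]

lemma psd_diag_nonneg' {n : ℕ} {S : Matrix (Fin n) (Fin n) ℝ} (hS : S.PosSemidef) (i : Fin n) :
    0 ≤ S i i := by
  have := hS.dotProduct_mulVec_nonneg (Pi.single i 1)
  simpa [dotProduct, Matrix.mulVec, Pi.single_apply, Finset.sum_ite_eq,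
    Finset.sum_ite_eq'] using this



/-- Sufficiency part of the equivalence theorem for the weighted A-criterion
    `Φ_{A_w}(v) = tr(L (M(v) + Δ⁻¹)⁻¹)` with `L = diag(ℓ₁,…,ℓ_P)`, `ℓᵢ ≥ 0`: if
    `tr(M(w)(M(w)+Δ⁻¹)⁻¹ L (M(w)+Δ⁻¹)⁻¹) ≥ eᵢᵀ (M(w)+Δ⁻¹)⁻¹ L (M(w)+Δ⁻¹)⁻¹ eᵢ`
    for all `i`, then `w` is optimal for the weighted A-criterion. -/
theorem stmt_7 (P : ℕ) (hP : 1 ≤ P)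
    (Δ : Matrix (Fin P) (Fin P) ℝ) (hΔ : Δ.PosDef)
    (ℓ : Fin P → ℝ) (hℓ : ∀ i, 0 ≤ ℓ i)
    (w : Fin P → ℝ) (hw : ∀ i, 0 ≤ w i) (hw1 : ∑ i, w i = 1)
    (hopt : ∀ i : Fin P,
      (Matrix.diagonal w * (Matrix.diagonal w + Δ⁻¹)⁻¹ * Matrix.diagonal ℓ *
          (Matrix.diagonal w + Δ⁻¹)⁻¹).trace ≥
        ((Matrix.diagonal w + Δ⁻¹)⁻¹ * Matrix.diagonal ℓ * (Matrix.diagonal w + Δ⁻¹)⁻¹) i i) :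
    ∀ v : Fin P → ℝ, (∀ i, 0 ≤ v i) → ∑ i, v i = 1 →
      (Matrix.diagonal ℓ * (Matrix.diagonal w + Δ⁻¹)⁻¹).trace ≤
        (Matrix.diagonal ℓ * (Matrix.diagonal v + Δ⁻¹)⁻¹).trace := by
  intro v hv hv1
  set A : Matrix (Fin P) (Fin P) ℝ := Matrix.diagonal w + Δ⁻¹ with hA_def
  set C : Matrix (Fin P) (Fin P) ℝ := Matrix.diagonal v + Δ⁻¹ with hC_def
  have hB : (Δ⁻¹).PosDef := hΔ.inv
  have hApd : A.PosDef :=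
    Matrix.PosDef.posSemidef_add (Matrix.PosSemidef.diagonal (fun i => hw i)) hB
  have hCpd : C.PosDef :=
    Matrix.PosDef.posSemidef_add (Matrix.PosSemidef.diagonal (fun i => hv i)) hB
  have hAu : IsUnit A.det := isUnit_iff_isUnit_det A |>.mp hApd.isUnit
  have hCu : IsUnit C.det := isUnit_iff_isUnit_det C |>.mp hCpd.isUnit
  have hCC' : C * C⁻¹ = 1 := Matrix.mul_nonsing_inv C hCu
  have hAA' : A * A⁻¹ = 1 := Matrix.mul_nonsing_inv A hAu
  -- the key algebraic identity
  have key : C⁻¹ = A⁻¹ - A⁻¹ * (C - A) * A⁻¹ + (C⁻¹ - A⁻¹) * C * (C⁻¹ - A⁻¹) := by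
    simp only [Matrix.mul_sub, Matrix.sub_mul, Matrix.mul_assoc,
      Matrix.nonsing_inv_mul_cancel_left _ _ hCu, hCC', hAA', Matrix.mul_one]
    abel
  -- X is symmetric, so X C X is PSD
  have hXsym : (C⁻¹ - A⁻¹).IsHermitian := hCpd.isHermitian.inv.sub hApd.isHermitian.inv
  have hPSD : ((C⁻¹ - A⁻¹) * C * (C⁻¹ - A⁻¹)).PosSemidef := by
    have := hCpd.posSemidef.mul_mul_conjTranspose_same (C⁻¹ - A⁻¹)
    rwa [hXsym.eq] at this
  have h1 : 0 ≤ (Matrix.diagonal ℓ * ((C⁻¹ - A⁻¹) * C * (C⁻¹ - A⁻¹))).trace := by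
    rw [trace_diagonal_mul']
    exact Finset.sum_nonneg fun i _ => mul_nonneg (hℓ i) (psd_diag_nonneg' hPSD i)
  -- the first-order term
  set S : Matrix (Fin P) (Fin P) ℝ := A⁻¹ * Matrix.diagonal ℓ * A⁻¹ with hS_def
  have hT : (Matrix.diagonal w * A⁻¹ * Matrix.diagonal ℓ * A⁻¹).trace = ∑ i, w i * S i i := by
    rw [show Matrix.diagonal w * A⁻¹ * Matrix.diagonal ℓ * A⁻¹ = Matrix.diagonal w * S by
      rw [hS_def, Matrix.mul_assoc, Matrix.mul_assoc, Matrix.mul_assoc]]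
    exact trace_diagonal_mul' w S
  have hle : ∀ i, S i i ≤ ∑ j, w j * S j j := fun i => by
    have h := hopt i; rw [hT] at h; exact h
  have h2 : (Matrix.diagonal ℓ * (A⁻¹ * (C - A) * A⁻¹)).trace ≤ 0 := by
    have hCA : C - A = Matrix.diagonal (v - w) := by
      rw [hC_def, hA_def]
      ext i j
      by_cases hij : i = j <;>
        simp [Matrix.diagonal_apply, hij, Matrix.sub_apply, Matrix.add_apply]
    have cyc : (Matrix.diagonal ℓ * (A⁻¹ * (C - A) * A⁻¹)).trace
        = (Matrix.diagonal (v - w) * S).trace := by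
      rw [hCA, hS_def,
        show Matrix.diagonal ℓ * (A⁻¹ * Matrix.diagonal (v - w) * A⁻¹)
          = (Matrix.diagonal ℓ * A⁻¹) * (Matrix.diagonal (v - w) * A⁻¹) by
            rw [Matrix.mul_assoc, Matrix.mul_assoc],
        Matrix.trace_mul_comm,
        show (Matrix.diagonal (v - w) * A⁻¹) * (Matrix.diagonal ℓ * A⁻¹)
          = Matrix.diagonal (v - w) * (A⁻¹ * Matrix.diagonal ℓ * A⁻¹) by
            rw [Matrix.mul_assoc, Matrix.mul_assoc]]
    rw [cyc, trace_diagonal_mul']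
    have hsplit : ∑ i, (v - w) i * S i i
        = (∑ i, v i * S i i) - ∑ i, w i * S i i := by
      simp only [Pi.sub_apply, sub_mul]
      exact Finset.sum_sub_distrib _ _
    have hv_le : ∑ i, v i * S i i ≤ ∑ j, w j * S j j := by
      calc ∑ i, v i * S i i ≤ ∑ i, v i * (∑ j, w j * S j j) :=
            Finset.sum_le_sum fun i _ => mul_le_mul_of_nonneg_left (hle i) (hv i)
        _ = (∑ i, v i) * (∑ j, w j * S j j) := by rw [← Finset.sum_mul]
        _ = ∑ j, w j * S j j := by rw [hv1, one_mul]
    rw [hsplit]; linarith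
  -- assemble
  have expand : (Matrix.diagonal ℓ * C⁻¹).trace
      = (Matrix.diagonal ℓ * A⁻¹).trace
        - (Matrix.diagonal ℓ * (A⁻¹ * (C - A) * A⁻¹)).trace
        + (Matrix.diagonal ℓ * ((C⁻¹ - A⁻¹) * C * (C⁻¹ - A⁻¹))).trace := by
    conv_lhs => rw [key]
    rw [Matrix.mul_add, Matrix.mul_sub, Matrix.trace_add, Matrix.trace_sub]
  rw [expand]
  linarith
end

section
/- Let P ≥ 1, let Δ be a symmetric positive definite P × P real matrix, and let L = diag(ℓ_1, …, ℓ_P) with ℓ_i ≥ 0. Let w* be a design (w*_i ≥ 0, Σ_i w*_i = 1) that minimizes the weighted A-criterion Φ_{A_w}(w) = tr( L (M(w) + Δ⁻¹)⁻¹ ) over all designs, where M(w) = diag(w_1, …, w_P) and M* = M(w*). Then tr( M* (M* + Δ⁻¹)⁻¹ L (M* + Δ⁻¹)⁻¹ ) ≥ e_iᵀ (M* + Δ⁻¹)⁻¹ L (M* + Δ⁻¹)⁻¹ e_i for all i = 1, …, P, and equality holds for every i with w*_i > 0. -/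
open Matrix

section Aux

variable {P : ℕ}

private lemma aux_trace_mul_diag_single (X : Matrix (Fin P) (Fin P) ℝ) (i : Fin P) :
    (X * Matrix.diagonal (Pi.single i 1)).trace = X i i := by
  classical
  simp [Matrix.trace, Matrix.diag, Matrix.mul_apply, Matrix.diagonal_apply, Pi.single_apply,
    Finset.sum_ite_eq]

private lemma aux_deriv_nonneg {φ : ℝ → ℝ} {d : ℝ} (h : HasDerivAt φ d 0)
    (hm : ∀ t ∈ Set.Ioc (0 : ℝ) 1, φ 0 ≤ φ t) : 0 ≤ d := by
  have hs : Filter.Tendsto (slope φ 0) (nhdsWithin 0 (Set.Ioi 0)) (nhds d) := by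
    refine (hasDerivAt_iff_tendsto_slope.mp h).mono_left (nhdsWithin_mono 0 ?_)
    intro x hx
    exact ne_of_gt hx
  refine ge_of_tendsto hs ?_
  filter_upwards [Ioc_mem_nhdsGT_of_mem (Set.mem_Ico.mpr ⟨le_refl (0:ℝ), one_pos⟩)] with t ht
  have ht0 : 0 < t := ht.1
  have : 0 ≤ φ t - φ 0 := sub_nonneg.mpr (hm t ht)
  have : 0 ≤ (φ t - φ 0) / (t - 0) := by
    apply div_nonneg this
    simpa using ht0.le
  simpa [slope_def_field, div_eq_inv_mul] using this

end Aux

/-- Necessity part of the equivalence theorem for the weighted A-criterion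
    `Φ_{A_w}(v) = tr(L (M(v) + Δ⁻¹)⁻¹)` with `L = diag(ℓ₁,…,ℓ_P)`, `ℓᵢ ≥ 0`: if `w`
    minimizes the weighted A-criterion over all designs, then
    `tr(M(w)(M(w)+Δ⁻¹)⁻¹ L (M(w)+Δ⁻¹)⁻¹) ≥ eᵢᵀ (M(w)+Δ⁻¹)⁻¹ L (M(w)+Δ⁻¹)⁻¹ eᵢ`
    for all `i`, with equality whenever `wᵢ > 0`. -/
theorem stmt_8 (P : ℕ) (hP : 1 ≤ P)
    (Δ : Matrix (Fin P) (Fin P) ℝ) (hΔ : Δ.PosDef)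
    (ℓ : Fin P → ℝ) (hℓ : ∀ i, 0 ≤ ℓ i)
    (w : Fin P → ℝ) (hw : ∀ i, 0 ≤ w i) (hw1 : ∑ i, w i = 1)
    (hmin : ∀ v : Fin P → ℝ, (∀ i, 0 ≤ v i) → ∑ i, v i = 1 →
      (Matrix.diagonal ℓ * (Matrix.diagonal w + Δ⁻¹)⁻¹).trace ≤
        (Matrix.diagonal ℓ * (Matrix.diagonal v + Δ⁻¹)⁻¹).trace) :
    (∀ i : Fin P,
      (Matrix.diagonal w * (Matrix.diagonal w + Δ⁻¹)⁻¹ * Matrix.diagonal ℓ *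
          (Matrix.diagonal w + Δ⁻¹)⁻¹).trace ≥
        ((Matrix.diagonal w + Δ⁻¹)⁻¹ * Matrix.diagonal ℓ * (Matrix.diagonal w + Δ⁻¹)⁻¹) i i) ∧
    (∀ i : Fin P, 0 < w i →
      (Matrix.diagonal w * (Matrix.diagonal w + Δ⁻¹)⁻¹ * Matrix.diagonal ℓ *
          (Matrix.diagonal w + Δ⁻¹)⁻¹).trace =
        ((Matrix.diagonal w + Δ⁻¹)⁻¹ * Matrix.diagonal ℓ * (Matrix.diagonal w + Δ⁻¹)⁻¹) i i) := by
  classical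
  letI : SeminormedRing (Matrix (Fin P) (Fin P) ℝ) := Matrix.linftyOpSemiNormedRing
  letI : NormedRing (Matrix (Fin P) (Fin P) ℝ) := Matrix.linftyOpNormedRing
  letI : NormedAlgebra ℝ (Matrix (Fin P) (Fin P) ℝ) := Matrix.linftyOpNormedAlgebra
  haveI : CompleteSpace (Matrix (Fin P) (Fin P) ℝ) := FiniteDimensional.complete ℝ _
  set A : Matrix (Fin P) (Fin P) ℝ := Matrix.diagonal w + Δ⁻¹ with hAdef
  have hA : A.PosDef := by
    exact Matrix.PosDef.posSemidef_add
      (Matrix.posSemidef_diagonal_iff.mpr (fun i => by exact_mod_cast hw i)) hΔ.inv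
  have hAunit : IsUnit A := (Matrix.isUnit_iff_isUnit_det A).mpr hA.det_pos.ne'.isUnit
  set u : (Matrix (Fin P) (Fin P) ℝ)ˣ := hAunit.unit with hu
  have huA : (u : Matrix (Fin P) (Fin P) ℝ) = A := hAunit.unit_spec
  have hB : ((u⁻¹ : _ˣ) : Matrix (Fin P) (Fin P) ℝ) = A⁻¹ := by
    rw [Matrix.nonsing_inv_eq_ringInverse, ← huA, Ring.inverse_unit]
  -- continuous linear map  X ↦ trace (diagonal ℓ * X)
  set T : Matrix (Fin P) (Fin P) ℝ →L[ℝ] ℝ :=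
    LinearMap.toContinuousLinearMap
      ((Matrix.traceLinearMap (Fin P) ℝ ℝ).comp (LinearMap.mulLeft ℝ (Matrix.diagonal ℓ)))
    with hT
  have hTapp : ∀ X, T X = (Matrix.diagonal ℓ * X).trace := fun X => rfl
  -- Main inequality
  have main : ∀ i : Fin P,
      ((Matrix.diagonal w + Δ⁻¹)⁻¹ * Matrix.diagonal ℓ * (Matrix.diagonal w + Δ⁻¹)⁻¹) i i ≤
      (Matrix.diagonal w * (Matrix.diagonal w + Δ⁻¹)⁻¹ * Matrix.diagonal ℓ *
          (Matrix.diagonal w + Δ⁻¹)⁻¹).trace := by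
    intro i
    set C : Matrix (Fin P) (Fin P) ℝ := Matrix.diagonal (Pi.single i 1 - w) with hC
    set φ : ℝ → ℝ := fun t => T (Ring.inverse (A + t • C)) with hφdef
    -- derivative of t ↦ A + t • C
    have hg : HasDerivAt (fun t : ℝ => A + t • C) C 0 := by
      have := ((hasDerivAt_id (0 : ℝ)).smul_const C).const_add A
      simp only [id_eq, one_smul] at this
      exact this
    have h1 : HasFDerivAt Ring.inverse
        (-(ContinuousLinearMap.mulLeftRight ℝ (Matrix (Fin P) (Fin P) ℝ)
            ((u⁻¹ : _ˣ) : Matrix (Fin P) (Fin P) ℝ) ((u⁻¹ : _ˣ) : Matrix (Fin P) (Fin P) ℝ)))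
        (A + (0 : ℝ) • C) := by
      simpa [huA] using hasFDerivAt_ringInverse (𝕜 := ℝ) u
    have hinv : HasDerivAt (fun t : ℝ => Ring.inverse (A + t • C))
        (-(A⁻¹ * C * A⁻¹)) 0 := by
      have := h1.comp_hasDerivAt 0 hg
      simp only [ContinuousLinearMap.neg_apply, ContinuousLinearMap.mulLeftRight_apply, hB,
        Function.comp_def] at this
      exact this
    have hφ : HasDerivAt φ (T (-(A⁻¹ * C * A⁻¹))) 0 :=
      T.hasFDerivAt.comp_hasDerivAt 0 hinv
    -- minimality along the segment toward e_i
    have hm : ∀ t ∈ Set.Ioc (0 : ℝ) 1, φ 0 ≤ φ t := by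
      intro t ht
      set v : Fin P → ℝ := w + t • (Pi.single i 1 - w) with hv
      have hv0 : ∀ j, 0 ≤ v j := by
        intro j
        have : v j = (1 - t) * w j + t * (Pi.single i 1 : Fin P → ℝ) j := by
          simp only [hv, Pi.add_apply, Pi.smul_apply, Pi.sub_apply, smul_eq_mul]; ring
        rw [this]
        have h1t : (0:ℝ) ≤ 1 - t := by linarith [ht.2]
        have hsj : (0:ℝ) ≤ (Pi.single i 1 : Fin P → ℝ) j := by
          rcases eq_or_ne j i with rfl | hne
          · simp
          · simp [Pi.single_eq_of_ne hne]
        exact add_nonneg (mul_nonneg h1t (hw j)) (mul_nonneg ht.1.le hsj)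
      have hv1 : ∑ j, v j = 1 := by
        have hsingle : ∑ j, (Pi.single i 1 : Fin P → ℝ) j = 1 := by
          simp [Pi.single_apply]
        have : ∑ j, v j = ∑ j, (w j + t * ((Pi.single i 1 : Fin P → ℝ) j - w j)) := by
          refine Finset.sum_congr rfl fun j _ => ?_
          simp [hv]
        rw [this, Finset.sum_add_distrib, hw1, ← Finset.mul_sum, Finset.sum_sub_distrib,
          hsingle, hw1]
        ring
      have hAv : A + t • C = Matrix.diagonal v + Δ⁻¹ := by
        rw [hAdef, hC, hv]
        ext j k
        rcases eq_or_ne j k with rfl | h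
        · simp [Matrix.add_apply, Matrix.smul_apply, Matrix.diagonal_apply_eq, Pi.add_apply,
            Pi.smul_apply, Pi.sub_apply, smul_eq_mul]
          ring
        · simp [Matrix.add_apply, Matrix.smul_apply, Matrix.diagonal_apply_ne _ h]
      have hφ0 : φ 0 = (Matrix.diagonal ℓ * (Matrix.diagonal w + Δ⁻¹)⁻¹).trace := by
        simp [hφdef, hTapp, ← hAdef, ← Matrix.nonsing_inv_eq_ringInverse]
      have hφt : φ t = (Matrix.diagonal ℓ * (Matrix.diagonal v + Δ⁻¹)⁻¹).trace := by
        simp [hφdef, hTapp, hAv, ← Matrix.nonsing_inv_eq_ringInverse]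
      rw [hφ0, hφt]
      exact hmin v hv0 hv1
    have hd : 0 ≤ T (-(A⁻¹ * C * A⁻¹)) := aux_deriv_nonneg hφ hm
    -- unfold the derivative value
    have hval : T (-(A⁻¹ * C * A⁻¹)) =
        (Matrix.diagonal ℓ * (A⁻¹ * Matrix.diagonal w * A⁻¹)).trace -
        (Matrix.diagonal ℓ * (A⁻¹ * Matrix.diagonal (Pi.single i 1) * A⁻¹)).trace := by
      rw [hTapp]
      have hCsplit : C = Matrix.diagonal (Pi.single i 1) - Matrix.diagonal w := by
        rw [hC]
        ext j k
        by_cases h : j = k <;> simp [Matrix.diagonal_apply, h]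
      rw [hCsplit]
      have : A⁻¹ * (Matrix.diagonal (Pi.single i 1) - Matrix.diagonal w) * A⁻¹ =
          A⁻¹ * Matrix.diagonal (Pi.single i 1) * A⁻¹ - A⁻¹ * Matrix.diagonal w * A⁻¹ := by
        noncomm_ring
      rw [this]
      simp [Matrix.mul_sub, Matrix.trace_sub]
    rw [hval] at hd
    -- rewrite both traces
    have e1 : (Matrix.diagonal ℓ * (A⁻¹ * Matrix.diagonal (Pi.single i 1) * A⁻¹)).trace =
        (A⁻¹ * Matrix.diagonal ℓ * A⁻¹) i i := by
      rw [show Matrix.diagonal ℓ * (A⁻¹ * Matrix.diagonal (Pi.single i 1) * A⁻¹) =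
          (Matrix.diagonal ℓ * A⁻¹) * Matrix.diagonal (Pi.single i 1) * A⁻¹ by noncomm_ring]
      rw [Matrix.trace_mul_cycle (Matrix.diagonal ℓ * A⁻¹) (Matrix.diagonal (Pi.single i 1)) A⁻¹]
      rw [show A⁻¹ * (Matrix.diagonal ℓ * A⁻¹) * Matrix.diagonal (Pi.single i 1) =
          (A⁻¹ * Matrix.diagonal ℓ * A⁻¹) * Matrix.diagonal (Pi.single i 1) by noncomm_ring]
      rw [aux_trace_mul_diag_single]
    have e2 : (Matrix.diagonal ℓ * (A⁻¹ * Matrix.diagonal w * A⁻¹)).trace =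
        (Matrix.diagonal w * A⁻¹ * Matrix.diagonal ℓ * A⁻¹).trace := by
      rw [show Matrix.diagonal ℓ * (A⁻¹ * Matrix.diagonal w * A⁻¹) =
          (Matrix.diagonal ℓ * A⁻¹) * (Matrix.diagonal w * A⁻¹) by noncomm_ring]
      rw [Matrix.trace_mul_comm (Matrix.diagonal ℓ * A⁻¹) (Matrix.diagonal w * A⁻¹)]
      congr 1
      noncomm_ring
    rw [e1, e2] at hd
    rw [← hAdef]
    linarith
  refine ⟨fun i => main i, ?_⟩
  -- Equality part
  set X : Matrix (Fin P) (Fin P) ℝ := A⁻¹ * Matrix.diagonal ℓ * A⁻¹ with hX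
  set tr : ℝ := (Matrix.diagonal w * A⁻¹ * Matrix.diagonal ℓ * A⁻¹).trace with htr
  have hsum : ∑ j, w j * (tr - X j j) = 0 := by
    have h1 : ∑ j, w j * X j j = tr := by
      rw [htr]
      rw [show Matrix.diagonal w * A⁻¹ * Matrix.diagonal ℓ * A⁻¹ = Matrix.diagonal w * X by
        rw [hX]; noncomm_ring]
      simp [Matrix.trace, Matrix.diag, Matrix.diagonal_mul]
    have h2 : ∑ j, w j * tr = tr := by
      rw [← Finset.sum_mul, hw1, one_mul]
    calc ∑ j, w j * (tr - X j j) = ∑ j, (w j * tr - w j * X j j) := by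
          congr 1; funext j; ring
      _ = (∑ j, w j * tr) - ∑ j, w j * X j j := Finset.sum_sub_distrib _ _
      _ = 0 := by rw [h1, h2, sub_self]
  have hterm : ∀ j ∈ Finset.univ, 0 ≤ w j * (tr - X j j) := by
    intro j _
    have hle : X j j ≤ tr := main j
    exact mul_nonneg (hw j) (by linarith)
  have hzero := (Finset.sum_eq_zero_iff_of_nonneg hterm).mp hsum
  intro i hi
  have := hzero i (Finset.mem_univ i)
  have h0 : tr - X i i = 0 := by
    rcases mul_eq_zero.mp this with h | h
    · exact absurd h hi.ne'
    · exact h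
  show tr = X i i
  linarith
end

section
/- Let P ≥ 1, let Δ be a symmetric positive definite P × P real matrix, and let L = diag(ℓ_1, …, ℓ_P) with ℓ_i ≥ 0. Let w* be a design minimizing Φ_{A_w}(w) = tr( L (M(w) + Δ⁻¹)⁻¹ ) over all designs (w_i ≥ 0, Σ_i w_i = 1), with M(w) = diag(w_1, …, w_P). If i and i' are indices with w*_i > 0 and w*_{i'} > 0, then e_iᵀ (M(w*) + Δ⁻¹)⁻¹ L (M(w*) + Δ⁻¹)⁻¹ e_i = e_{i'}ᵀ (M(w*) + Δ⁻¹)⁻¹ L (M(w*) + Δ⁻¹)⁻¹ e_{i'}. -/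
set_option maxHeartbeats 1000000

open Matrix

attribute [local instance] Matrix.linftyOpNormedRing Matrix.linftyOpNormedAlgebra

/-- for a design `w` that is optimal for the weighted A-criterion
    `Φ_{A_w}(v) = tr(L (M(v) + Δ⁻¹)⁻¹)` with `L = diag(ℓ₁,…,ℓ_P)`, `ℓᵢ ≥ 0`, any two
    support points `i, i'` (with `wᵢ > 0`, `w_{i'} > 0`) satisfy
    `eᵢᵀ (M(w)+Δ⁻¹)⁻¹ L (M(w)+Δ⁻¹)⁻¹ eᵢ = e_{i'}ᵀ (M(w)+Δ⁻¹)⁻¹ L (M(w)+Δ⁻¹)⁻¹ e_{i'}`. -/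
theorem stmt_9 (P : ℕ) (hP : 1 ≤ P)
    (Δ : Matrix (Fin P) (Fin P) ℝ) (hΔ : Δ.PosDef)
    (ℓ : Fin P → ℝ) (hℓ : ∀ i, 0 ≤ ℓ i)
    (w : Fin P → ℝ) (hw : ∀ i, 0 ≤ w i) (hw1 : ∑ i, w i = 1)
    (hmin : ∀ v : Fin P → ℝ, (∀ i, 0 ≤ v i) → ∑ i, v i = 1 →
      (Matrix.diagonal ℓ * (Matrix.diagonal w + Δ⁻¹)⁻¹).trace ≤
        (Matrix.diagonal ℓ * (Matrix.diagonal v + Δ⁻¹)⁻¹).trace)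
    (i i' : Fin P) (hi : 0 < w i) (hi' : 0 < w i') :
    ((Matrix.diagonal w + Δ⁻¹)⁻¹ * Matrix.diagonal ℓ * (Matrix.diagonal w + Δ⁻¹)⁻¹) i i =
      ((Matrix.diagonal w + Δ⁻¹)⁻¹ * Matrix.diagonal ℓ * (Matrix.diagonal w + Δ⁻¹)⁻¹) i' i' := by
  classical
  by_cases hii : i = i'
  · rw [hii]
  haveI : CompleteSpace (Matrix (Fin P) (Fin P) ℝ) := FiniteDimensional.complete ℝ _
  set B : Matrix (Fin P) (Fin P) ℝ := Matrix.diagonal w + Δ⁻¹ with hBdef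
  have hB : B.PosDef := by
    have h1 : (Matrix.diagonal w).PosSemidef :=
      Matrix.posSemidef_diagonal_iff.mpr hw
    exact Matrix.PosDef.posSemidef_add h1 hΔ.inv
  have hBu : IsUnit B := by
    rw [Matrix.isUnit_iff_isUnit_det]
    exact isUnit_iff_ne_zero.mpr hB.det_pos.ne'
  set u : (Matrix (Fin P) (Fin P) ℝ)ˣ := hBu.unit with hudef
  have hu : (u : Matrix (Fin P) (Fin P) ℝ) = B := hBu.unit_spec
  have huinv : ((u⁻¹ : (Matrix (Fin P) (Fin P) ℝ)ˣ) : Matrix (Fin P) (Fin P) ℝ) = B⁻¹ := by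
    rw [Matrix.coe_units_inv, hu]
  set d : Fin P → ℝ := Pi.single i' 1 - Pi.single i 1 with hddef
  set D : Matrix (Fin P) (Fin P) ℝ := Matrix.diagonal d with hDdef
  -- the continuous linear functional M ↦ trace (L * M)
  set T : Matrix (Fin P) (Fin P) ℝ →L[ℝ] ℝ :=
    LinearMap.toContinuousLinearMap
      ((Matrix.traceLinearMap (Fin P) ℝ ℝ).comp
        (LinearMap.mulLeft ℝ (Matrix.diagonal ℓ))) with hTdef
  have hT : ∀ M, T M = (Matrix.diagonal ℓ * M).trace := fun M => rfl
  set f : ℝ → ℝ := fun ε => T (Ring.inverse (B + ε • D)) with hfdef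
  -- derivative
  have hc : HasDerivAt (fun ε : ℝ => B + ε • D) D 0 := by
    have h := ((hasDerivAt_id (0:ℝ)).smul_const D).const_add B
    rw [one_smul] at h
    exact h
  have hg : HasDerivAt (fun ε : ℝ => Ring.inverse (B + ε • D)) (-(B⁻¹ * D * B⁻¹)) 0 := by
    have h0 : B + (0:ℝ) • D = ↑u := by simp [hu]
    have hinv := hasFDerivAt_ringInverse (𝕜 := ℝ) u
    rw [← h0] at hinv
    have := hinv.comp_hasDerivAt 0 hc
    simp [huinv] at this
    exact this
  have hf' : HasDerivAt f (T (-(B⁻¹ * D * B⁻¹))) 0 := T.hasFDerivAt.comp_hasDerivAt 0 hg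
  -- local minimum at 0
  have hlm : IsLocalMin f 0 := by
    have hδ : (0:ℝ) < min (w i) (w i') := lt_min hi hi'
    filter_upwards [Ioo_mem_nhds (neg_lt_zero.mpr hδ) hδ] with ε hε
    obtain ⟨hε1, hε2⟩ := hε
    set v : Fin P → ℝ := w + ε • d with hvdef
    have hv0 : ∀ j, 0 ≤ v j := by
      intro j
      simp only [hvdef, Pi.add_apply, Pi.smul_apply, hddef, Pi.sub_apply, smul_eq_mul]
      rcases eq_or_ne j i' with rfl | hji'
      · have : j ≠ i := fun h => hii (h.symm)
        simp [Pi.single_apply, this]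
        nlinarith [min_le_right (w i) (w j), hε1, hw j]
      · rcases eq_or_ne j i with rfl | hji
        · simp [Pi.single_apply, hji', hii]
          nlinarith [min_le_left (w j) (w i'), hε2, hw j]
        · simp [Pi.single_apply, hji, hji', hw j]
    have hv1 : ∑ j, v j = 1 := by
      simp [hvdef, hddef, Finset.sum_add_distrib, ← Finset.mul_sum, hw1,
        Finset.sum_sub_distrib, Pi.single_apply]
    have hdiag : Matrix.diagonal v + Δ⁻¹ = B + ε • D := by
      ext j k
      by_cases h : j = k
      · subst h
        simp [hvdef, hBdef, hDdef, Matrix.add_apply, Matrix.smul_apply,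
          Matrix.diagonal_apply_eq]
        ring
      · simp [hvdef, hBdef, hDdef, Matrix.add_apply, Matrix.smul_apply,
          Matrix.diagonal_apply_ne _ h]
    have := hmin v hv0 hv1
    rw [hdiag] at this
    simpa [hfdef, hT, Matrix.nonsing_inv_eq_ringInverse, hu] using this
  have hzero : T (-(B⁻¹ * D * B⁻¹)) = 0 := hlm.hasDerivAt_eq_zero hf'
  -- unfold
  rw [hT] at hzero
  have htr : (Matrix.diagonal ℓ * -(B⁻¹ * D * B⁻¹)).trace
      = -((B⁻¹ * Matrix.diagonal ℓ * B⁻¹ * D).trace) := by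
    rw [Matrix.mul_neg, Matrix.trace_neg]
    congr 1
    rw [show Matrix.diagonal ℓ * (B⁻¹ * D * B⁻¹) = (Matrix.diagonal ℓ * B⁻¹) * D * B⁻¹ by
        simp only [mul_assoc],
      Matrix.trace_mul_cycle]
    simp only [mul_assoc]
  rw [htr, neg_eq_zero] at hzero
  set C := B⁻¹ * Matrix.diagonal ℓ * B⁻¹ with hCdef
  have hCD : (C * D).trace = C i' i' - C i i := by
    simp [Matrix.trace, Matrix.mul_diagonal, hDdef, hddef, Pi.sub_apply, Pi.single_apply,
      mul_sub, Finset.sum_sub_distrib, mul_ite, Finset.sum_ite_eq']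
  rw [hCD] at hzero
  linarith
end

section
/- Let P ≥ 1 and let Δ be a diagonal P × P real matrix with strictly positive diagonal entries. Let w̃ be a design (w̃_i ≥ 0, Σ_i w̃_i = 1) with M̃ = diag(w̃_1, …, w̃_P), and suppose w̃ satisfies the equal-efficiency condition e_iᵀ (M̃ + Δ⁻¹)⁻¹ e_i = e_{i'}ᵀ (M̃ + Δ⁻¹)⁻¹ e_{i'} for all i, i' = 1, …, P. Then w̃ minimizes the A-criterion Φ_A(w) = tr( (M(w) + Δ⁻¹)⁻¹ ) over all designs w, where M(w) = diag(w_1, …, w_P). -/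
open Matrix

lemma aux_inv_diag (P : ℕ) (f : Fin P → ℝ) (hf : ∀ i, 0 < f i) :
    (Matrix.diagonal f)⁻¹ = Matrix.diagonal (fun i => (f i)⁻¹) := by
  apply Matrix.inv_eq_right_inv
  rw [Matrix.diagonal_mul_diagonal]
  rw [show (fun i => f i * (f i)⁻¹) = fun _ => (1:ℝ) from funext fun i => mul_inv_cancel₀ (hf i).ne']
  exact Matrix.diagonal_one

lemma aux_tangent (t x : ℝ) (ht : 0 < t) (hx : 0 < x) :
    2 / t - x / t ^ 2 ≤ x⁻¹ := by
  have h : x⁻¹ - (2 / t - x / t ^ 2) = (x - t) ^ 2 / (x * t ^ 2) := by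
    field_simp; ring
  nlinarith [div_nonneg (sq_nonneg (x - t)) (le_of_lt (by positivity : (0:ℝ) < x * t ^ 2))]

/-- if `Δ` is diagonal with strictly positive diagonal entries and the design
    `w̃` satisfies the equal-efficiency condition (all diagonal entries of `(M(w̃)+Δ⁻¹)⁻¹`
    are equal), then `w̃` minimizes the A-criterion `Φ_A(v) = tr((M(v)+Δ⁻¹)⁻¹)` over all
    designs. -/
theorem stmt_11 (P : ℕ) (hP : 1 ≤ P)
    (d : Fin P → ℝ) (hd : ∀ i, 0 < d i)
    (Δ : Matrix (Fin P) (Fin P) ℝ) (hΔ : Δ = Matrix.diagonal d)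
    (w : Fin P → ℝ) (hw : ∀ i, 0 ≤ w i) (hw1 : ∑ i, w i = 1)
    (heq : ∀ i i' : Fin P,
      ((Matrix.diagonal w + Δ⁻¹)⁻¹) i i = ((Matrix.diagonal w + Δ⁻¹)⁻¹) i' i') :
    ∀ v : Fin P → ℝ, (∀ i, 0 ≤ v i) → ∑ i, v i = 1 →
      ((Matrix.diagonal w + Δ⁻¹)⁻¹).trace ≤ ((Matrix.diagonal v + Δ⁻¹)⁻¹).trace := by
  intro v hv hv1
  set c : Fin P → ℝ := fun i => (d i)⁻¹ with hc
  have hcpos : ∀ i, 0 < c i := fun i => inv_pos.2 (hd i)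
  have hΔinv : Δ⁻¹ = Matrix.diagonal c := by
    rw [hΔ]; exact aux_inv_diag P d hd
  have hkey : ∀ u : Fin P → ℝ, (∀ i, 0 ≤ u i) →
      (Matrix.diagonal u + Δ⁻¹)⁻¹ = Matrix.diagonal (fun i => (u i + c i)⁻¹) := by
    intro u hu
    rw [hΔinv, Matrix.diagonal_add]
    exact aux_inv_diag P _ (fun i => add_pos_of_nonneg_of_pos (hu i) (hcpos i))
  -- constant t
  have i0 : Fin P := ⟨0, hP⟩
  set t : ℝ := w i0 + c i0 with htdef
  have ht : 0 < t := add_pos_of_nonneg_of_pos (hw i0) (hcpos i0)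
  have hconst : ∀ i, w i + c i = t := by
    intro i
    have h := heq i i0
    rw [hkey w hw] at h
    simp only [Matrix.diagonal_apply_eq] at h
    have := inv_injective h
    linarith [this]
  rw [hkey w hw, hkey v hv, Matrix.trace_diagonal, Matrix.trace_diagonal]
  have hsum : ∑ i, (v i + c i) = (P : ℝ) * t := by
    have : ∑ i, (w i + c i) = (P : ℝ) * t := by
      rw [Finset.sum_congr rfl (fun i _ => hconst i)]
      simp [mul_comm]
    rw [Finset.sum_add_distrib] at this ⊢
    rw [hv1]; rw [hw1] at this; linarith
  have hlb : ∀ i, 2 / t - (v i + c i) / t ^ 2 ≤ (v i + c i)⁻¹ :=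
    fun i => aux_tangent t _ ht (add_pos_of_nonneg_of_pos (hv i) (hcpos i))
  calc ∑ i, (w i + c i)⁻¹ = ∑ i : Fin P, t⁻¹ := by
        refine Finset.sum_congr rfl fun i _ => ?_; rw [hconst i]
    _ = ∑ i, (2 / t - (v i + c i) / t ^ 2) := by
        rw [Finset.sum_sub_distrib, ← Finset.sum_div, ← Finset.sum_div, hsum, Finset.sum_const, Finset.sum_const]
        simp only [Finset.card_univ, Fintype.card_fin, nsmul_eq_mul]
        have : (0:ℝ) < P := by exact_mod_cast hP
        field_simp
        ring
    _ ≤ ∑ i, (v i + c i)⁻¹ := Finset.sum_le_sum fun i _ => hlb i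
end

section
/- Let P ≥ 1 and let Δ be a diagonal P × P real matrix with strictly positive diagonal entries. Let w̃ be a design (w̃_i ≥ 0, Σ_i w̃_i = 1) with w̃_i > 0 for all i = 1, …, P, that minimizes the A-criterion Φ_A(w) = tr( (M(w) + Δ⁻¹)⁻¹ ) over all designs w, where M(w) = diag(w_1, …, w_P). Then w̃ satisfies the equal-efficiency condition: e_iᵀ (M(w̃) + Δ⁻¹)⁻¹ e_i = e_{i'}ᵀ (M(w̃) + Δ⁻¹)⁻¹ e_{i'} for all i, i' = 1, …, P. -/
open Matrix

lemma stmt12_diag_inv (P : ℕ) (g : Fin P → ℝ) (hg : ∀ i, g i ≠ 0) :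
    (Matrix.diagonal g)⁻¹ = Matrix.diagonal (fun i => (g i)⁻¹) := by
  apply Matrix.inv_eq_right_inv
  rw [Matrix.diagonal_mul_diagonal]
  have : (fun i => g i * (g i)⁻¹) = fun _ : Fin P => (1:ℝ) := by
    funext i; exact mul_inv_cancel₀ (hg i)
  rw [this, Matrix.diagonal_one]

lemma stmt12_scalar (a b ε : ℝ) (ha : 0 < a) (hab : a < b) (hε : 0 < ε) (hε2 : ε ≤ (b-a)/2) :
    (a+ε)⁻¹ + (b-ε)⁻¹ < a⁻¹ + b⁻¹ := by
  have h1 : 0 < a + ε := by linarith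
  have h2 : a + ε ≤ b - ε := by linarith
  have h3 : 0 < b - ε := lt_of_lt_of_le h1 h2
  have h4 : 0 < b := by linarith
  have key : a*(a+ε) < b*(b-ε) := by nlinarith
  rw [inv_eq_one_div, inv_eq_one_div, inv_eq_one_div, inv_eq_one_div,
    div_add_div _ _ (ne_of_gt h1) (ne_of_gt h3), div_add_div _ _ (ne_of_gt ha) (ne_of_gt h4),
    div_lt_div_iff₀ (by positivity) (by positivity)]
  nlinarith [mul_pos ha h1, mul_pos h4 h3, mul_pos hε (mul_pos ha h1)]

/-- if `Δ` is diagonal with strictly positive diagonal entries and the design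
    `w̃`, with all weights strictly positive, minimizes the A-criterion
    `Φ_A(v) = tr((M(v)+Δ⁻¹)⁻¹)` over all designs, then `w̃` satisfies the equal-efficiency
    condition: all diagonal entries of `(M(w̃)+Δ⁻¹)⁻¹` are equal. -/
theorem stmt_12 (P : ℕ) (hP : 1 ≤ P)
    (d : Fin P → ℝ) (hd : ∀ i, 0 < d i)
    (Δ : Matrix (Fin P) (Fin P) ℝ) (hΔ : Δ = Matrix.diagonal d)
    (w : Fin P → ℝ) (hw : ∀ i, 0 ≤ w i) (hw1 : ∑ i, w i = 1)
    (hpos : ∀ i, 0 < w i)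
    (hmin : ∀ v : Fin P → ℝ, (∀ i, 0 ≤ v i) → ∑ i, v i = 1 →
      ((Matrix.diagonal w + Δ⁻¹)⁻¹).trace ≤ ((Matrix.diagonal v + Δ⁻¹)⁻¹).trace) :
    ∀ i i' : Fin P,
      ((Matrix.diagonal w + Δ⁻¹)⁻¹) i i = ((Matrix.diagonal w + Δ⁻¹)⁻¹) i' i' := by
  subst hΔ
  have key : ∀ v : Fin P → ℝ, (∀ i, 0 ≤ v i) →
      (Matrix.diagonal v + (Matrix.diagonal d)⁻¹)⁻¹
        = Matrix.diagonal (fun i => (v i + (d i)⁻¹)⁻¹) := by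
    intro v hv
    rw [stmt12_diag_inv P d (fun i => (hd i).ne'), Matrix.diagonal_add,
      stmt12_diag_inv P _ (fun i => (add_pos_of_nonneg_of_pos (hv i) (inv_pos.mpr (hd i))).ne')]
  have htr : ∀ v : Fin P → ℝ, (∀ i, 0 ≤ v i) →
      ((Matrix.diagonal v + (Matrix.diagonal d)⁻¹)⁻¹).trace = ∑ i, (v i + (d i)⁻¹)⁻¹ := by
    intro v hv
    rw [key v hv, Matrix.trace_diagonal]
  -- main analytic step
  have main : ∀ i i' : Fin P, w i + (d i)⁻¹ < w i' + (d i')⁻¹ → False := by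
    intro i i' hab
    set a := w i + (d i)⁻¹ with ha_def
    set b := w i' + (d i')⁻¹ with hb_def
    have hii' : i ≠ i' := by
      rintro rfl; exact lt_irrefl _ hab
    have ha : 0 < a := add_pos (hpos i) (inv_pos.mpr (hd i))
    set ε := min ((b - a)/2) (w i' / 2) with hε_def
    have hε : 0 < ε := lt_min (half_pos (sub_pos.mpr hab)) (half_pos (hpos i'))
    have hε1 : ε ≤ (b - a)/2 := min_le_left _ _
    have hε2 : ε ≤ w i' / 2 := min_le_right _ _
    set v : Fin P → ℝ := fun j => w j + (if j = i then ε else 0) + (if j = i' then -ε else 0)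
      with hv_def
    have hv0 : ∀ j, 0 ≤ v j := by
      intro j
      simp only [hv_def]
      rcases eq_or_ne j i' with rfl | hj'
      · have : ((w j + if j = i then ε else 0) + if j = j then -ε else 0) = w j - ε := by
          rw [if_neg (by rintro rfl; exact hii' rfl), if_pos rfl]; ring
        rw [this]
        linarith [hpos j]
      · rw [if_neg hj']
        split_ifs <;> linarith [hw j, hε.le]
    have hv1 : ∑ j, v j = 1 := by
      simp only [hv_def]
      rw [Finset.sum_add_distrib, Finset.sum_add_distrib, hw1]
      rw [Finset.sum_ite_eq' Finset.univ i (fun _ => ε),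
        Finset.sum_ite_eq' Finset.univ i' (fun _ => -ε)]
      simp
    have hlt : ∑ j, (v j + (d j)⁻¹)⁻¹ < ∑ j, (w j + (d j)⁻¹)⁻¹ := by
      have decomp : ∀ g : Fin P → ℝ, ∑ j, g j
          = g i + (g i' + ∑ j ∈ (Finset.univ.erase i).erase i', g j) := by
        intro g
        rw [← Finset.add_sum_erase _ _ (Finset.mem_univ i),
          ← Finset.add_sum_erase _ _ (Finset.mem_erase.mpr ⟨Ne.symm hii', Finset.mem_univ i'⟩)]
      rw [decomp (fun j => (v j + (d j)⁻¹)⁻¹), decomp (fun j => (w j + (d j)⁻¹)⁻¹)]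
      have hrest : ∑ j ∈ (Finset.univ.erase i).erase i', (v j + (d j)⁻¹)⁻¹
          = ∑ j ∈ (Finset.univ.erase i).erase i', (w j + (d j)⁻¹)⁻¹ := by
        apply Finset.sum_congr rfl
        intro j hj
        have hj1 : j ≠ i' := (Finset.mem_erase.mp hj).1
        have hj2 : j ≠ i := (Finset.mem_erase.mp (Finset.mem_erase.mp hj).2).1
        simp [hv_def, hj1, hj2]
      rw [hrest]
      have hvi : v i = w i + ε := by simp [hv_def, hii']
      have hvi' : v i' = w i' - ε := by simp [hv_def, Ne.symm hii']; ring
      have : v i + (d i)⁻¹ = a + ε := by rw [hvi, ha_def]; ring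
      have h2 : v i' + (d i')⁻¹ = b - ε := by rw [hvi', hb_def]; ring
      simp only [this, h2]
      have := stmt12_scalar a b ε ha hab hε hε1
      linarith
    have := hmin v hv0 hv1
    rw [htr w hw, htr v hv0] at this
    linarith
  intro i i'
  rw [key w hw]
  simp only [Matrix.diagonal_apply_eq]
  rcases lt_trichotomy (w i + (d i)⁻¹) (w i' + (d i')⁻¹) with h | h | h
  · exact absurd h (fun h => main i i' h)
  · rw [h]
  · exact absurd h (fun h => main i' i h)
end

section
/- Let K ≥ 2, P ≥ 1, J ≥ 1, σ² > 0, v_2 ≥ 0, and let D be a symmetric positive definite P × P real matrix. For a design w (w_i ≥ 0, Σ_i w_i = 1) with M(w) = diag(w_1, …, w_P), define MSE_α(w) = σ² [ (1/K) 1_K 1_Kᵀ ⊗ D + (I_K − (1/K) 1_K 1_Kᵀ) ⊗ ( (2J/(2v_2+1)) M(w) + D⁻¹ )⁻¹ ] and MSE_θ(w) = 2σ² ( (2J/(2v_2+1)) M(w) + D⁻¹ )⁻¹. Then tr(MSE_α(w)) = σ² tr(D) + (K−1) σ² tr( ( (2J/(2v_2+1)) M(w) + D⁻¹ )⁻¹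 ) and tr(MSE_θ(w)) = 2σ² tr( ( (2J/(2v_2+1)) M(w) + D⁻¹ )⁻¹ ). Consequently, a design w* minimizes tr(MSE_α(w)) over all designs if and only if it minimizes tr(MSE_θ(w)) over all designs. -/
open Matrix
open scoped Kronecker

/-- traces of the MSE matrices for the genotype effects and the pairwise
    contrasts, extended to approximate designs. With
    `W(w) = ((2J/(2v₂+1)) M(w) + D⁻¹)⁻¹`,
    `MSE_α(w) = σ²[(1/K)1_K1_Kᵀ ⊗ D + (I_K − (1/K)1_K1_Kᵀ) ⊗ W(w)]` and
    `MSE_θ(w) = 2σ² W(w)`, one has `tr MSE_α(w) = σ² tr D + (K−1)σ² tr W(w)` and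
    `tr MSE_θ(w) = 2σ² tr W(w)`; consequently a design minimizes `tr MSE_α` over all
    designs iff it minimizes `tr MSE_θ` over all designs. -/
theorem stmt_13 (K P J : ℕ) (hK : 2 ≤ K) (hP : 1 ≤ P) (hJ : 1 ≤ J)
    (σ2 v2 : ℝ) (hσ2 : 0 < σ2) (hv2 : 0 ≤ v2)
    (D : Matrix (Fin P) (Fin P) ℝ) (hD : D.PosDef)
    (W : (Fin P → ℝ) → Matrix (Fin P) (Fin P) ℝ)
    (hW : ∀ w, W w = ((2 * (J : ℝ) / (2 * v2 + 1)) • Matrix.diagonal w + D⁻¹)⁻¹)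
    (MSEα : (Fin P → ℝ) → Matrix (Fin K × Fin P) (Fin K × Fin P) ℝ)
    (hMSEα : ∀ w, MSEα w = σ2 •
      ((((K : ℝ)⁻¹ • (Matrix.of fun _ _ => (1 : ℝ)) : Matrix (Fin K) (Fin K) ℝ) ⊗ₖ D) +
        (((1 : Matrix (Fin K) (Fin K) ℝ) -
            (K : ℝ)⁻¹ • (Matrix.of fun _ _ => (1 : ℝ))) ⊗ₖ W w)))
    (MSEθ : (Fin P → ℝ) → Matrix (Fin P) (Fin P) ℝ)
    (hMSEθ : ∀ w, MSEθ w = (2 * σ2) • W w) :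
    (∀ w : Fin P → ℝ, (∀ i, 0 ≤ w i) → ∑ i, w i = 1 →
      (MSEα w).trace = σ2 * D.trace + ((K : ℝ) - 1) * σ2 * (W w).trace ∧
      (MSEθ w).trace = 2 * σ2 * (W w).trace) ∧
    (∀ w : Fin P → ℝ, (∀ i, 0 ≤ w i) → ∑ i, w i = 1 →
      ((∀ v : Fin P → ℝ, (∀ i, 0 ≤ v i) → ∑ i, v i = 1 →
          (MSEα w).trace ≤ (MSEα v).trace) ↔
        (∀ v : Fin P → ℝ, (∀ i, 0 ≤ v i) → ∑ i, v i = 1 →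
          (MSEθ w).trace ≤ (MSEθ v).trace))) := by
  have hK0 : (K : ℝ) ≠ 0 := by positivity
  have htr1 : ((K : ℝ)⁻¹ • (Matrix.of fun _ _ => (1 : ℝ)) :
      Matrix (Fin K) (Fin K) ℝ).trace = 1 := by
    simp [Matrix.trace, Matrix.diag, Finset.sum_const, mul_comm]
    field_simp
  have hαtr : ∀ w, (MSEα w).trace = σ2 * D.trace + ((K : ℝ) - 1) * σ2 * (W w).trace := by
    intro w
    rw [hMSEα, Matrix.trace_smul, Matrix.trace_add, Matrix.trace_kronecker,
      Matrix.trace_kronecker, Matrix.trace_sub, Matrix.trace_one, htr1]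
    simp [Fintype.card_fin]
    ring
  have hθtr : ∀ w, (MSEθ w).trace = 2 * σ2 * (W w).trace := by
    intro w
    rw [hMSEθ, Matrix.trace_smul]
    simp [smul_eq_mul]
  refine ⟨fun w _ _ => ⟨hαtr w, hθtr w⟩, fun w _ _ => ?_⟩
  have hc : (0:ℝ) < ((K : ℝ) - 1) * σ2 := by
    have : (2:ℝ) ≤ K := by exact_mod_cast hK
    nlinarith
  constructor
  · intro h v hv1 hv2'
    rw [hθtr, hθtr]
    have := h v hv1 hv2'
    rw [hαtr, hαtr] at this
    have hWle : (W w).trace ≤ (W v).trace := by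
      nlinarith
    nlinarith
  · intro h v hv1 hv2'
    rw [hαtr, hαtr]
    have := h v hv1 hv2'
    rw [hθtr, hθtr] at this
    have hWle : (W w).trace ≤ (W v).trace := by nlinarith
    nlinarith
end
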